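/- arXiv:2503.13519 — 3 statements merged into one kernel-verified Lean document; each statement's English description precedes it below -/
import Mathlib

section
/- Every RC-lattice (a finite lattice in which all reducible elements are pairwise comparable) is a dismantlable lattice. -/
open Finset

section Prelim
variable {α : Type*}

/-- An element is join-reducible if it is the join of two elements distinct from it. -/
def JoinReducible [Lattice α] (x : α) : Prop := ∃ y z, y ≠ x ∧ z ≠ x ∧ y ⊔ z = x

/-- An element is meet-reducible if it is the meet of two elements distinct from it. -/
def MeetReducible [Lattice α] (x : α) : Prop := ∃ y z, y ≠ x ∧ z ≠ x ∧ y ⊓ z = x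

/-- An element of a lattice is reducible if it is join- or meet-reducible. -/
def LatReducible [Lattice α] (x : α) : Prop := JoinReducible x ∨ MeetReducible x

/-- An RC-lattice: all reducible elements are pairwise comparable. -/
def IsRCLattice (α : Type*) [Lattice α] : Prop :=
  ∀ x y : α, LatReducible x → LatReducible y → x ≤ y ∨ y ≤ x

/-- A finite lattice is dismantlable if there is a strictly increasing chain of sublattices
with `|L_i| = i`, ending at the whole lattice. -/
def Dismantlable (α : Type*) [Lattice α] [Fintype α] : Prop :=
  ∃ f : Fin (Fintype.card α) → Sublattice α,
    StrictMono f ∧ ∀ i : Fin (Fintype.card α), ((f i : Set α)).ncard = (i : ℕ) + 1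

/-- The cover (Hasse) graph of a partial order. -/
def coverGraph (α : Type*) [PartialOrder α] : SimpleGraph α where
  Adj x y := x ⋖ y ∨ y ⋖ x
  symm := ⟨fun _ _ h => Or.symm h⟩
  loopless := ⟨fun x h => by rcases h with h | h <;> exact h.ne rfl⟩

/-- The nullity (cycle rank) of the cover graph of a poset:
(number of covering edges) − (number of elements) + (number of connected components). -/
noncomputable def nullity (α : Type*) [PartialOrder α] : ℕ :=
  Nat.card (coverGraph α).edgeSet + Nat.card ((coverGraph α).ConnectedComponent) - Nat.card α

/-- An adjunct representation of a lattice as chains `C 0, …, C k`, where for `i ≠ 0`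
the chain `C i` is attached strictly between `a i < b i` (with `a i` not covered by `b i`),
lying in an earlier chain. -/
def IsAdjunctRep (α : Type*) [Lattice α] (k : ℕ) (C : Fin (k + 1) → Set α)
    (a b : Fin (k + 1) → α) : Prop :=
  (∀ i, IsChain (· ≤ ·) (C i)) ∧
  (∀ i, (C i).Nonempty) ∧
  (⋃ i, C i) = Set.univ ∧
  (Pairwise fun i j => Disjoint (C i) (C j)) ∧
  ∀ i : Fin (k + 1), i ≠ 0 →
    a i < b i ∧ ¬ (a i ⋖ b i) ∧
    (∃ j, j < i ∧ a i ∈ C j) ∧ (∃ j, j < i ∧ b i ∈ C j) ∧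
    (∀ x ∈ C i, ∀ y, y ∉ C i → ((x ≤ y ↔ b i ≤ y) ∧ (y ≤ x ↔ y ≤ a i)))

/-- A lattice is an adjunct of `k+1` chains. -/
def IsAdjunctOfChains (α : Type*) [Lattice α] (k : ℕ) : Prop :=
  ∃ C a b, IsAdjunctRep α k C a b

/-- A poset element is reducible if it has at least two lower covers or at least two upper
covers. -/
def PReducible [PartialOrder α] (x : α) : Prop :=
  (∃ y z, y ≠ z ∧ y ⋖ x ∧ z ⋖ x) ∨ (∃ y z, y ≠ z ∧ x ⋖ y ∧ x ⋖ z)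

/-- An element is doubly irreducible within the induced subposet on `S`:
at most one lower cover and at most one upper cover. -/
def DoublyIrrOn [PartialOrder α] (S : Set α) (x : ↥S) : Prop :=
  {y : ↥S | y ⋖ x}.Subsingleton ∧ {y : ↥S | x ⋖ y}.Subsingleton

/-- One step of the basic-retract process: remove a doubly irreducible element whose
removal preserves nullity. -/
def RetractStep [PartialOrder α] (S T : Set α) : Prop :=
  ∃ (x : α) (hx : x ∈ S), T = S \ {x} ∧ DoublyIrrOn S ⟨x, hx⟩ ∧ nullity ↥T = nullity ↥S

/-- One step of the pendant-vertex removal process: remove an element having exactly one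
neighbour in the cover graph of the induced subposet. -/
def PendantStep [PartialOrder α] (S T : Set α) : Prop :=
  ∃ (x : α) (hx : x ∈ S), T = S \ {x} ∧
    ({y : ↥S | y ⋖ (⟨x, hx⟩ : ↥S) ∨ (⟨x, hx⟩ : ↥S) ⋖ y}).ncard = 1

/-- `R` is the basic retract of the whole poset. -/
def IsBasicRetract (α : Type*) [PartialOrder α] (R : Set α) : Prop :=
  Relation.ReflTransGen (RetractStep (α := α)) Set.univ R ∧ ∀ T, ¬ RetractStep R T

/-- `B` is the basic block associated to the poset: obtained from the basic retract by
successive removal of all pendant vertices. -/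
def IsBasicBlockAssoc (α : Type*) [PartialOrder α] (B : Set α) : Prop :=
  ∃ R, IsBasicRetract α R ∧ Relation.ReflTransGen (PendantStep (α := α)) R B ∧
    ∀ T, ¬ PendantStep B T

end Prelim

/-- The order relation of an explicit lattice structure on `Fin n`. -/
def lle {n : ℕ} (L : Lattice (Fin n)) (x y : Fin n) : Prop :=
  letI := L; x ≤ y

/-- Isomorphism of explicit lattice structures on `Fin m` and `Fin n`. -/
def latIso {m n : ℕ} (L : Lattice (Fin m)) (M : Lattice (Fin n)) : Prop :=
  ∃ e : Fin m ≃ Fin n, ∀ x y, lle L x y ↔ lle M (e x) (e y)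

/-- The number of isomorphism classes of lattices on `Fin n` satisfying `P`. -/
noncomputable def isoCount {n : ℕ} (P : Lattice (Fin n) → Prop) : ℕ :=
  Nat.card (Quot (fun L M : {L : Lattice (Fin n) // P L} => latIso L.1 M.1))

/-- The class of RC-lattices on `n` elements with exactly `r` reducible elements and
nullity `k`. -/
def LClass (n r k : ℕ) : Lattice (Fin n) → Prop := fun L =>
  letI := L
  IsRCLattice (Fin n) ∧ Nat.card {x : Fin n // LatReducible x} = r ∧ nullity (Fin n) = k

/-- The class of (maximal) blocks on `n` elements with exactly `r` comparable reducible
elements and nullity `k`: both the least and the greatest element are reducible. -/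
def BlockClass (n r k : ℕ) : Lattice (Fin n) → Prop := fun L =>
  LClass n r k L ∧
    (letI := L
     (∃ x : Fin n, IsBot x ∧ LatReducible x) ∧ (∃ x : Fin n, IsTop x ∧ LatReducible x))

/-- `partCount m t` is the number of partitions of `m` into exactly `t` positive parts. -/
noncomputable def partCount (m t : ℕ) : ℕ :=
  Nat.card {c : Multiset ℕ // Multiset.card c = t ∧ (∀ x ∈ c, 0 < x) ∧ c.sum = m}

/-- `L` is a linear (ordinal) sum of `L₁` and `L₂`. -/
def IsLinearSumOf {n p q : ℕ} (L : Lattice (Fin n)) (L₁ : Lattice (Fin p))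
    (L₂ : Lattice (Fin q)) : Prop :=
  ∃ (e₁ : Fin p → Fin n) (e₂ : Fin q → Fin n),
    Function.Injective e₁ ∧ Function.Injective e₂ ∧
    (∀ x, (∃ a, e₁ a = x) ∨ ∃ b, e₂ b = x) ∧
    (∀ a b, e₁ a ≠ e₂ b) ∧
    (∀ a a', lle L₁ a a' ↔ lle L (e₁ a) (e₁ a')) ∧
    (∀ b b', lle L₂ b b' ↔ lle L (e₂ b) (e₂ b')) ∧
    (∀ a b, lle L (e₁ a) (e₂ b))

/-- `L` is a vertical sum of `L₁` and `L₂`: the top of `L₁` is identified with the bottom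
of `L₂`. -/
def IsVerticalSumOf {n p q : ℕ} (L : Lattice (Fin n)) (L₁ : Lattice (Fin p))
    (L₂ : Lattice (Fin q)) : Prop :=
  ∃ (e₁ : Fin p → Fin n) (e₂ : Fin q → Fin n) (t₁ : Fin p) (b₂ : Fin q),
    (∀ a, lle L₁ a t₁) ∧ (∀ b, lle L₂ b₂ b) ∧
    Function.Injective e₁ ∧ Function.Injective e₂ ∧
    (∀ x, (∃ a, e₁ a = x) ∨ ∃ b, e₂ b = x) ∧
    e₁ t₁ = e₂ b₂ ∧
    (∀ a b, e₁ a = e₂ b → a = t₁ ∧ b = b₂) ∧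
    (∀ a a', lle L₁ a a' ↔ lle L (e₁ a) (e₁ a')) ∧
    (∀ b b', lle L₂ b b' ↔ lle L (e₂ b) (e₂ b')) ∧
    (∀ a b, lle L (e₁ a) (e₂ b))

/-- The order of the basic block `B₆` on elements `0̂=0, a=1, b=2, c=3, 1̂=4, c₁=5, c₂=6, c₃=7`:
the chain `0̂ ≺ a ≺ b ≺ c ≺ 1̂` with `c₁` adjoined between `0̂` and `c`, `c₂` between `a`
and `1̂`, and `c₃` between `b` and `1̂`. -/
def b6le (x y : Fin 8) : Bool :=
  x == y || x == 0 ||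
  (x == 1 && (y == 2 || y == 3 || y == 4 || y == 6 || y == 7)) ||
  (x == 2 && (y == 3 || y == 4 || y == 7)) ||
  (x == 3 && y == 4) ||
  (x == 5 && (y == 3 || y == 4)) ||
  (x == 6 && y == 4) ||
  (x == 7 && y == 4)

lemma b6_refl : ∀ a : Fin 8, b6le a a = true := by decide
lemma b6_trans : ∀ a b c : Fin 8, b6le a b = true → b6le b c = true → b6le a c = true := by
  decide
lemma b6_antisymm : ∀ a b : Fin 8, b6le a b = true → b6le b a = true → a = b := by decide

/-- The basic block `B₆` as a poset. -/
def B6 : Type := Fin 8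

instance : PartialOrder B6 where
  le x y := b6le x y = true
  le_refl := b6_refl
  le_trans := b6_trans
  le_antisymm := b6_antisymm

/-- The order of the basic block `B₈` on elements
`0̂=0, a=1, b=2, c=3, x=4, 1̂=5, c₁=6, c₂=7, c₃=8`:
the chain `0̂ ≺ a ≺ b ≺ c ≺ x ≺ 1̂` with `c₁` adjoined between `0̂` and `b`, `c₂` between `a`
and `c`, and `c₃` between `c` and `1̂`. -/
def b8le (x y : Fin 9) : Bool :=
  x == y || x == 0 ||
  (x == 1 && (y == 2 || y == 3 || y == 4 || y == 5 || y == 7 || y == 8)) ||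
  (x == 2 && (y == 3 || y == 4 || y == 5 || y == 8)) ||
  (x == 3 && (y == 4 || y == 5 || y == 8)) ||
  (x == 4 && y == 5) ||
  (x == 6 && (y == 2 || y == 3 || y == 4 || y == 5 || y == 8)) ||
  (x == 7 && (y == 3 || y == 4 || y == 5 || y == 8)) ||
  (x == 8 && y == 5)

lemma b8_refl : ∀ a : Fin 9, b8le a a = true := by decide
lemma b8_trans : ∀ a b c : Fin 9, b8le a b = true → b8le b c = true → b8le a c = true := by
  decide
lemma b8_antisymm : ∀ a b : Fin 9, b8le a b = true → b8le b a = true → a = b := by decide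

/-- The basic block `B₈` as a poset. -/
def B8 : Type := Fin 9

instance : PartialOrder B8 where
  le x y := b8le x y = true
  le_refl := b8_refl
  le_trans := b8_trans
  le_antisymm := b8_antisymm

-- exists irreducible element
lemma exists_irred {α : Type*} [Lattice α] [Nonempty α] (h : IsRCLattice α) :
    ∃ x : α, ¬ LatReducible x := by
  by_contra hc
  push_neg at hc
  obtain ⟨x⟩ := ‹Nonempty α›
  rcases hc x with ⟨y, z, hy, hz, hxy⟩ | ⟨y, z, hy, hz, hxy⟩
  · rcases h y z (hc y) (hc z) with hle | hle
    · exact hz (by rw [← hxy, sup_eq_right.2 hle])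
    · exact hy (by rw [← hxy, sup_eq_left.2 hle])
  · rcases h y z (hc y) (hc z) with hle | hle
    · exact hy (by rw [← hxy, inf_eq_left.2 hle])
    · exact hz (by rw [← hxy, inf_eq_right.2 hle])

lemma dismantlable_aux : ∀ (n : ℕ) (α : Type*) [Lattice α] [Fintype α],
    Fintype.card α = n → IsRCLattice α → Dismantlable α := by
  intro n
  induction n with
  | zero =>
    intro α _ _ hcard _
    refine ⟨fun i => (hcard ▸ i).elim0, fun i => (hcard ▸ i).elim0, fun i => (hcard ▸ i).elim0⟩
  | succ n ih =>
    intro α _ _ hcard hRC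
    classical
    have hne : Nonempty α := Fintype.card_pos_iff.mp (by omega)
    obtain ⟨x, hx⟩ := exists_irred hRC
    -- sublattice missing x
    set S : Sublattice α :=
      { carrier := {y | y ≠ x}
        supClosed' := by
          intro a ha b hb hab
          exact hx (Or.inl ⟨a, b, ha, hb, hab⟩)
        infClosed' := by
          intro a ha b hb hab
          exact hx (Or.inr ⟨a, b, ha, hb, hab⟩) } with hS
    have hmemS : ∀ y : α, y ∈ S ↔ y ≠ x := fun y => Iff.rfl
    have hcardS : Fintype.card S = n := by
      have e : Fintype.card S = Fintype.card {y : α // y ≠ x} :=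
        Fintype.card_congr (Equiv.subtypeEquivRight (fun y => Iff.rfl))
      rw [e, Fintype.card_subtype_compl, hcard]
      simp
    have hRCS : IsRCLattice S := by
      intro a b ha hb
      have key : ∀ c : S, LatReducible c → LatReducible (c : α) := by
        rintro c (⟨y, z, hy, hz, hyz⟩ | ⟨y, z, hy, hz, hyz⟩)
        · exact Or.inl ⟨y, z, fun e => hy (Subtype.ext e), fun e => hz (Subtype.ext e),
            by exact_mod_cast congrArg Subtype.val hyz⟩
        · exact Or.inr ⟨y, z, fun e => hy (Subtype.ext e), fun e => hz (Subtype.ext e),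
            by exact_mod_cast congrArg Subtype.val hyz⟩
      rcases hRC a b (key a ha) (key b hb) with h | h
      · exact Or.inl h
      · exact Or.inr h
    obtain ⟨f, hmono, hcardf⟩ := ih S hcardS hRCS
    -- lift sublattices
    let lift : Sublattice S → Sublattice α := fun T =>
      { carrier := Subtype.val '' (T : Set S)
        supClosed' := by
          rintro _ ⟨a, ha, rfl⟩ _ ⟨b, hb, rfl⟩
          exact ⟨a ⊔ b, T.supClosed' ha hb, rfl⟩
        infClosed' := by
          rintro _ ⟨a, ha, rfl⟩ _ ⟨b, hb, rfl⟩
          exact ⟨a ⊓ b, T.infClosed' ha hb, rfl⟩ }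
    have liftcoe : ∀ T, (lift T : Set α) = Subtype.val '' (T : Set S) := fun _ => rfl
    refine ⟨fun i => if h : (i : ℕ) < Fintype.card S then lift (f ⟨i, h⟩) else ⊤, ?_, ?_⟩
    · intro i j hij
      rw [← SetLike.coe_ssubset_coe]
      by_cases hi : (i : ℕ) < Fintype.card S
      · by_cases hj : (j : ℕ) < Fintype.card S
        · simp only [dif_pos hi, dif_pos hj, liftcoe]
          have hlt : f ⟨i, hi⟩ < f ⟨j, hj⟩ := hmono (by exact hij)
          rw [← SetLike.coe_ssubset_coe] at hlt
          exact ⟨Set.image_mono hlt.1, fun hsub =>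
            hlt.2 ((Set.image_subset_image_iff Subtype.val_injective).1 hsub)⟩
        · simp only [dif_pos hi, dif_neg hj]
          constructor
          · intro y _; trivial
          · intro hsub
            have hxmem : x ∈ (⊤ : Sublattice α) := trivial
            have := hsub hxmem
            rw [liftcoe] at this
            obtain ⟨⟨a, ha⟩, _, heq⟩ := this
            exact ha heq
      · exfalso
        have h1 : (j : ℕ) < n + 1 := hcard ▸ j.2
        have h2 : (i : ℕ) < (j : ℕ) := hij
        have hi' : n ≤ (i : ℕ) := hcardS ▸ not_lt.1 hi
        exact absurd (hi'.trans_lt (h2.trans_le (Nat.lt_succ_iff.mp h1))) (lt_irrefl n)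
    · intro i
      by_cases hi : (i : ℕ) < Fintype.card S
      · simp only [dif_pos hi, liftcoe]
        rw [Set.ncard_image_of_injective _ Subtype.val_injective]
        exact hcardf ⟨i, hi⟩
      · simp only [dif_neg hi]
        have hin : (i : ℕ) = n := by
          have h1 : (i : ℕ) < n + 1 := hcard ▸ i.2
          have hi' : n ≤ (i : ℕ) := hcardS ▸ not_lt.1 hi
          exact le_antisymm (Nat.lt_succ_iff.mp h1) hi'
        rw [hin]
        show (Set.univ : Set α).ncard = n + 1
        rw [Set.ncard_univ, Nat.card_eq_fintype_card, hcard]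

/-- Every RC-lattice is a dismantlable lattice. -/
theorem rcLattice_dismantlable (α : Type*) [Lattice α] [Fintype α]
    (h : IsRCLattice α) : Dismantlable α :=
  dismantlable_aux _ α rfl h
end

section
/- If L is a dismantlable lattice of nullity k with exactly r reducible elements, then 2 ≤ r ≤ 2k. -/
open Finset

section AuxCount

open SimpleGraph Finset

variable {β : Type*} [Lattice β] [Fintype β]

private lemma cover_reachable_of_le (b : β) : ∀ a : β, a ≤ b → (coverGraph β).Reachable a b := by
  intro a
  induction a using (wellFounded_gt (α := β)).induction with
  | _ a IH =>
    intro hab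
    rcases eq_or_lt_of_le hab with rfl | hlt
    · exact SimpleGraph.Reachable.refl a
    · obtain ⟨c, hac, hcb⟩ := exists_covBy_le_of_lt hlt
      exact (SimpleGraph.Adj.reachable (Or.inl hac)).trans (IH c hac.lt hcb)

private lemma cover_preconnected [Nonempty β] : (coverGraph β).Preconnected := by
  classical
  set bot : β := Finset.univ.inf' Finset.univ_nonempty id with hbotdef
  have hbot : ∀ x : β, bot ≤ x := fun x => Finset.inf'_le id (Finset.mem_univ x)
  intro x y
  exact ((cover_reachable_of_le x bot (hbot x)).symm).trans (cover_reachable_of_le y bot (hbot y))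

end AuxCount
/-- A dismantlable lattice of nullity `k ≥ 1` with exactly `r` reducible
elements satisfies `2 ≤ r ≤ 2k`. -/
theorem dismantlable_reducible_bounds (α : Type*) [Lattice α] [Fintype α]
    (k r : ℕ) (hk : 1 ≤ k) (hd : Dismantlable α) (hnull : nullity α = k)
    (hr : Nat.card {x : α // LatReducible x} = r) :
    2 ≤ r ∧ r ≤ 2 * k := by
  classical
  -- α is nonempty, else nullity = 0
  have hne : Nonempty α := by
    by_contra h
    rw [not_nonempty_iff] at h
    have h2 : IsEmpty ((coverGraph α).ConnectedComponent) :=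
      ⟨fun c => c.ind fun v => h.false v⟩
    have h3 : IsEmpty ((coverGraph α).edgeSet) := by
      constructor
      rintro ⟨e, he⟩
      induction e with
      | h a b => exact h.false a
    have h0 : nullity α = 0 := by
      rw [nullity, Nat.card_of_isEmpty, Nat.card_of_isEmpty, Nat.card_of_isEmpty]
    omega
  obtain ⟨x0⟩ := hne
  haveI : Nonempty α := ⟨x0⟩
  haveI : DecidableRel (coverGraph α).Adj := Classical.decRel _
  set n := Fintype.card α with hn
  set E := ((coverGraph α).edgeFinset).card with hEdef
  have hnpos : 1 ≤ n := Fintype.card_pos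
  -- the cover graph is connected
  have hcomp : Nat.card ((coverGraph α).ConnectedComponent) = 1 := by
    haveI := (cover_preconnected (β := α)).subsingleton_connectedComponent
    haveI : Nonempty ((coverGraph α).ConnectedComponent) :=
      ⟨(coverGraph α).connectedComponentMk x0⟩
    exact Nat.card_eq_one_iff_unique.mpr ⟨inferInstance, inferInstance⟩
  have hEcard : Nat.card ((coverGraph α).edgeSet) = E := by
    rw [Nat.card_eq_fintype_card, hEdef, SimpleGraph.edgeFinset_card]
  have hEn : E + 1 = n + k := by
    have h := hnull
    rw [nullity, hEcard, hcomp, Nat.card_eq_fintype_card, ← hn] at h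
    omega
  -- lower and upper cover sets
  set low : α → Finset α := fun x => Finset.univ.filter (· ⋖ x) with hlowdef
  set up : α → Finset α := fun x => Finset.univ.filter (x ⋖ ·) with hupdef
  have hdeg : ∀ x, (coverGraph α).degree x = (low x).card + (up x).card := by
    intro x
    have hnb : (coverGraph α).neighborFinset x = low x ∪ up x := by
      ext y
      simp only [SimpleGraph.mem_neighborFinset, coverGraph, hlowdef, hupdef,
        Finset.mem_union, Finset.mem_filter, Finset.mem_univ, true_and]
      show y ∈ (coverGraph α).neighborFinset x ↔ _
      rw [SimpleGraph.mem_neighborFinset]; exact Or.comm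
    have hdisj : Disjoint (low x) (up x) := by
      rw [Finset.disjoint_left]
      intro y h1 h2
      simp only [hlowdef, hupdef, Finset.mem_filter, Finset.mem_univ, true_and] at h1 h2
      exact absurd (h1.lt.trans h2.lt) (lt_irrefl y)
    rw [SimpleGraph.degree, hnb, Finset.card_union_of_disjoint hdisj]
  -- bottom and top
  set bot : α := Finset.univ.inf' Finset.univ_nonempty id with hbotdef
  have hbot : ∀ x : α, bot ≤ x := fun x => Finset.inf'_le id (Finset.mem_univ x)
  set top : α := Finset.univ.sup' Finset.univ_nonempty id with htopdef
  have htop : ∀ x : α, x ≤ top := fun x => Finset.le_sup' id (Finset.mem_univ x)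
  -- cover counting lemmas
  have hlow1 : ∀ x : α, x ≠ bot → 1 ≤ (low x).card := by
    intro x hx
    obtain ⟨c, _, hc⟩ := exists_le_covBy_of_lt ((hbot x).lt_of_ne (Ne.symm hx))
    exact Finset.card_pos.mpr ⟨c, by simp [hlowdef, hc]⟩
  have hup1 : ∀ x : α, x ≠ top → 1 ≤ (up x).card := by
    intro x hx
    obtain ⟨c, hc, _⟩ := exists_covBy_le_of_lt ((htop x).lt_of_ne hx)
    exact Finset.card_pos.mpr ⟨c, by simp [hupdef, hc]⟩
  have hlow2 : ∀ x : α, JoinReducible x → 2 ≤ (low x).card := by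
    intro x hx
    obtain ⟨y, z, hy, hz, hyz⟩ := hx
    have hylt : y < x := lt_of_le_of_ne (hyz ▸ le_sup_left) hy
    have hzlt : z < x := lt_of_le_of_ne (hyz ▸ le_sup_right) hz
    obtain ⟨c1, hyc1, hc1⟩ := exists_le_covBy_of_lt hylt
    obtain ⟨c2, hzc2, hc2⟩ := exists_le_covBy_of_lt hzlt
    have hcne : c1 ≠ c2 := by
      rintro rfl
      exact absurd (hyz ▸ sup_le hyc1 hzc2) hc1.lt.not_ge
    exact Finset.one_lt_card.mpr ⟨c1, by simp [hlowdef, hc1], c2, by simp [hlowdef, hc2], hcne⟩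
  have hup2 : ∀ x : α, MeetReducible x → 2 ≤ (up x).card := by
    intro x hx
    obtain ⟨y, z, hy, hz, hyz⟩ := hx
    have hylt : x < y := lt_of_le_of_ne (hyz ▸ inf_le_left) (Ne.symm hy)
    have hzlt : x < z := lt_of_le_of_ne (hyz ▸ inf_le_right) (Ne.symm hz)
    obtain ⟨c1, hc1, hyc1⟩ := exists_covBy_le_of_lt hylt
    obtain ⟨c2, hc2, hzc2⟩ := exists_covBy_le_of_lt hzlt
    have hcne : c1 ≠ c2 := by
      rintro rfl
      exact absurd (hyz ▸ le_inf hyc1 hzc2) hc1.lt.not_ge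
    exact Finset.one_lt_card.mpr ⟨c1, by simp [hupdef, hc1], c2, by simp [hupdef, hc2], hcne⟩
  -- extremal elements are not reducible in the wrong direction
  have hjne : ∀ x : α, JoinReducible x → x ≠ bot := by
    rintro x ⟨y, z, hy, _, hyz⟩ rfl
    exact hy (le_antisymm (hyz ▸ le_sup_left) (hbot y))
  have hmne : ∀ x : α, MeetReducible x → x ≠ top := by
    rintro x ⟨y, z, hy, _, hyz⟩ rfl
    exact hy (le_antisymm (htop y) (hyz ▸ inf_le_left))
  -- sum identities
  have hsum_ne : ∀ a : α, ∑ x : α, (if x = a then (0 : ℕ) else 1) = n - 1 := by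
    intro a
    rw [← Finset.sum_erase_add _ _ (Finset.mem_univ a), if_pos rfl, add_zero]
    rw [Finset.sum_congr rfl fun x hx => if_neg (Finset.ne_of_mem_erase hx)]
    simp [Finset.card_erase_of_mem, hn]
  have hsum_red : ∑ x : α, (if LatReducible x then (1 : ℕ) else 0) = r := by
    rw [Finset.sum_boole]
    rw [← hr, Nat.card_eq_fintype_card, Fintype.card_subtype]
    norm_num
  have hsumdeg : ∑ x : α, (coverGraph α).degree x = 2 * E :=
    SimpleGraph.sum_degrees_eq_twice_card_edges _
  -- per-vertex lower bound for degrees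
  have hmain : ∀ x : α, (if x = bot then 0 else 1) + (if x = top then 0 else 1) +
      (if LatReducible x then 1 else 0) ≤ (low x).card + (up x).card := by
    intro x
    by_cases hred : LatReducible x
    · rw [if_pos hred]
      have hb1 : (if x = bot then (0:ℕ) else 1) ≤ 1 := by split <;> omega
      have ht1 : (if x = top then (0:ℕ) else 1) ≤ 1 := by split <;> omega
      rcases hred with hj | hm
      · have h2 := hlow2 x hj
        by_cases ht : x = top
        · rw [if_pos ht]; omega
        · have := hup1 x ht; rw [if_neg ht]; omega
      · have h2 := hup2 x hm
        by_cases hb : x = bot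
        · rw [if_pos hb]; omega
        · have := hlow1 x hb; rw [if_neg hb]; omega
    · rw [if_neg hred, add_zero]
      by_cases hb : x = bot <;> by_cases ht : x = top
      · rw [if_pos hb, if_pos ht]; omega
      · have := hup1 x ht; rw [if_pos hb, if_neg ht]; omega
      · have := hlow1 x hb; rw [if_neg hb, if_pos ht]; omega
      · have h1 := hlow1 x hb; have h2 := hup1 x ht
        rw [if_neg hb, if_neg ht]; omega
  have hub : (n - 1) + (n - 1) + r ≤ 2 * E := by
    calc (n - 1) + (n - 1) + r
        = ∑ x : α, ((if x = bot then 0 else 1) + (if x = top then 0 else 1) +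
            (if LatReducible x then 1 else 0)) := by
          rw [Finset.sum_add_distrib, Finset.sum_add_distrib, hsum_ne bot, hsum_ne top, hsum_red]
      _ ≤ ∑ x : α, (coverGraph α).degree x :=
          Finset.sum_le_sum fun x _ => by rw [hdeg x]; exact hmain x
      _ = 2 * E := hsumdeg
  -- lower bound: there exist incomparable elements
  have hincomp : ∃ x y : α, ¬ x ≤ y ∧ ¬ y ≤ x := by
    by_contra hcon
    push_neg at hcon
    have htotal : ∀ a b : α, a ≤ b ∨ b ≤ a :=
      fun a b => (em (a ≤ b)).elim Or.inl (fun h => Or.inr (hcon a b h))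
    have hup' : ∀ x : α, (up x).card ≤ if x = top then 0 else 1 := by
      intro x
      by_cases ht : x = top
      · rw [if_pos ht]
        have : up x = ∅ := by
          apply Finset.eq_empty_of_forall_notMem
          intro y hy
          simp only [hupdef, Finset.mem_filter, Finset.mem_univ, true_and] at hy
          exact absurd (htop y) (ht ▸ hy.lt.not_ge)
        simp [this]
      · rw [if_neg ht]
        apply Finset.card_le_one.mpr
        intro a ha b hb
        simp only [hupdef, Finset.mem_filter, Finset.mem_univ, true_and] at ha hb
        rcases htotal a b with hab | hba
        · rcases lt_or_eq_of_le hab with h' | h'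
          · exact absurd h' (hb.2 ha.lt)
          · exact h'
        · rcases lt_or_eq_of_le hba with h' | h'
          · exact absurd h' (ha.2 hb.lt)
          · exact h'.symm
    have hlow' : ∀ x : α, (low x).card ≤ if x = bot then 0 else 1 := by
      intro x
      by_cases hb : x = bot
      · rw [if_pos hb]
        have : low x = ∅ := by
          apply Finset.eq_empty_of_forall_notMem
          intro y hy
          simp only [hlowdef, Finset.mem_filter, Finset.mem_univ, true_and] at hy
          exact absurd (hbot y) (hb ▸ hy.lt.not_ge)
        simp [this]
      · rw [if_neg hb]
        apply Finset.card_le_one.mpr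
        intro a ha b hb'
        simp only [hlowdef, Finset.mem_filter, Finset.mem_univ, true_and] at ha hb'
        rcases htotal a b with hab | hba
        · rcases lt_or_eq_of_le hab with h' | h'
          · exact absurd hb'.lt (ha.2 h')
          · exact h'
        · rcases lt_or_eq_of_le hba with h' | h'
          · exact absurd ha.lt (hb'.2 h')
          · exact h'.symm
    have hle : 2 * E ≤ (n - 1) + (n - 1) := by
      calc 2 * E = ∑ x : α, (coverGraph α).degree x := hsumdeg.symm
        _ ≤ ∑ x : α, ((if x = bot then 0 else 1) + (if x = top then 0 else 1)) := by
            apply Finset.sum_le_sum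
            intro x _
            rw [hdeg x]
            exact Nat.add_le_add (hlow' x) (hup' x)
        _ = (n - 1) + (n - 1) := by
            rw [Finset.sum_add_distrib, hsum_ne bot, hsum_ne top]
    omega
  obtain ⟨x, y, hxy, hyx⟩ := hincomp
  have hm : MeetReducible (x ⊓ y) :=
    ⟨x, y, fun h => hxy ((le_of_eq h).trans inf_le_right),
      fun h => hyx ((le_of_eq h).trans inf_le_left), rfl⟩
  have hj : JoinReducible (x ⊔ y) :=
    ⟨x, y, fun h => hyx (le_sup_right.trans (le_of_eq h.symm)),
      fun h => hxy (le_sup_left.trans (le_of_eq h.symm)), rfl⟩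
  have hne2 : x ⊓ y ≠ x ⊔ y := fun h =>
    hxy ((le_sup_left.trans_eq h.symm).trans inf_le_right)
  have h2r : 2 ≤ r := by
    rw [← hr, Nat.card_eq_fintype_card, Fintype.card_subtype]
    apply Finset.one_lt_card.mpr
    exact ⟨x ⊓ y, Finset.mem_filter.mpr ⟨Finset.mem_univ _, Or.inr hm⟩, x ⊔ y, Finset.mem_filter.mpr ⟨Finset.mem_univ _, Or.inl hj⟩, hne2⟩
  exact ⟨h2r, by omega⟩
end

section
/- Let B be a finite lattice that is an adjunct of chains starting from a maximal chain, and let B* be its order dual. Then B* is also an adjunct of chains, B and B* have the same number of elements, the same number of reducible elements, and the same nullity; moreover B ↦ B* is a bijection (up to isomorphism) between the class of blocks with a given basic block and the class of blocks whose basic block is the dual basic block. -/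
open Finset

section DualTransfer
open OrderDual
variable {α : Type*}

lemma latReducible_dual' [Lattice α] (x : αᵒᵈ) : LatReducible x ↔ LatReducible (ofDual x) :=
  or_comm

lemma nullity_congr' {α β : Type*} [PartialOrder α] [PartialOrder β] (e : α ≃ β)
    (h : ∀ x y : α, (coverGraph β).Adj (e x) (e y) ↔ (coverGraph α).Adj x y) :
    nullity α = nullity β := by
  let iso : coverGraph α ≃g coverGraph β := ⟨e, h _ _⟩
  unfold nullity
  rw [Nat.card_congr iso.mapEdgeSet, Nat.card_congr iso.connectedComponentEquiv,
    Nat.card_congr e]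

lemma nullity_dual' (α : Type*) [PartialOrder α] : nullity αᵒᵈ = nullity α :=
  (nullity_congr' (toDual : α ≃ αᵒᵈ) (fun x y => by
    show (toDual x ⋖ toDual y ∨ toDual y ⋖ toDual x) ↔ (x ⋖ y ∨ y ⋖ x)
    rw [toDual_covBy_toDual_iff, toDual_covBy_toDual_iff]; exact or_comm)).symm

lemma dualSub_covBy_iff [PartialOrder α] {S : Set α} (p q : ↥(ofDual ⁻¹' S)) :
    p ⋖ q ↔ (⟨ofDual q.1, q.2⟩ : ↥S) ⋖ ⟨ofDual p.1, p.2⟩ := by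
  constructor
  · rintro ⟨h1, h2⟩
    refine ⟨h1, fun c hc1 hc2 => h2 (c := ⟨toDual c.1, c.2⟩) hc2 hc1⟩
  · rintro ⟨h1, h2⟩
    refine ⟨h1, fun c hc1 hc2 => h2 (c := ⟨ofDual c.1, c.2⟩) hc2 hc1⟩

/-- Equiv between the dual-preimage subtype and the original subtype. -/
def dualSubEquiv [PartialOrder α] (S : Set α) : ↥(ofDual ⁻¹' S) ≃ ↥S where
  toFun p := ⟨ofDual p.1, p.2⟩
  invFun q := ⟨toDual q.1, q.2⟩
  left_inv _ := rfl
  right_inv _ := rfl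

lemma nullity_sub_dual [PartialOrder α] (S : Set α) :
    nullity ↥(ofDual ⁻¹' S) = nullity ↥S :=
  nullity_congr' (dualSubEquiv S) (fun p q => by
    show ((⟨ofDual p.1, p.2⟩ : ↥S) ⋖ ⟨ofDual q.1, q.2⟩ ∨
        (⟨ofDual q.1, q.2⟩ : ↥S) ⋖ ⟨ofDual p.1, p.2⟩) ↔ (p ⋖ q ∨ q ⋖ p)
    rw [← dualSub_covBy_iff q p, ← dualSub_covBy_iff p q]; exact or_comm)

lemma doublyIrrOn_dual [PartialOrder α] {S : Set α} {x : α} (hx : x ∈ S) :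
    DoublyIrrOn (ofDual ⁻¹' S) ⟨toDual x, hx⟩ ↔ DoublyIrrOn S ⟨x, hx⟩ := by
  constructor
  · rintro ⟨h1, h2⟩
    constructor
    · intro y hy z hz
      have := h2 ((dualSub_covBy_iff ⟨toDual x, hx⟩ ⟨toDual y.1, y.2⟩).mpr hy)
        ((dualSub_covBy_iff ⟨toDual x, hx⟩ ⟨toDual z.1, z.2⟩).mpr hz)
      exact Subtype.ext (congrArg (fun w : ↥(ofDual ⁻¹' _) => ofDual w.1) this)
    · intro y hy z hz
      have := h1 ((dualSub_covBy_iff ⟨toDual y.1, y.2⟩ ⟨toDual x, hx⟩).mpr hy)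
        ((dualSub_covBy_iff ⟨toDual z.1, z.2⟩ ⟨toDual x, hx⟩).mpr hz)
      exact Subtype.ext (congrArg (fun w : ↥(ofDual ⁻¹' _) => ofDual w.1) this)
  · rintro ⟨h1, h2⟩
    constructor
    · intro y hy z hz
      have := h2 ((dualSub_covBy_iff y ⟨toDual x, hx⟩).mp hy)
        ((dualSub_covBy_iff z ⟨toDual x, hx⟩).mp hz)
      exact Subtype.ext (congrArg (fun w : ↥S => toDual w.1) this)
    · intro y hy z hz
      have := h1 ((dualSub_covBy_iff ⟨toDual x, hx⟩ y).mp hy)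
        ((dualSub_covBy_iff ⟨toDual x, hx⟩ z).mp hz)
      exact Subtype.ext (congrArg (fun w : ↥S => toDual w.1) this)

lemma retractStep_dual [PartialOrder α] {S T : Set α} (h : RetractStep S T) :
    RetractStep (ofDual ⁻¹' S : Set αᵒᵈ) (ofDual ⁻¹' T) := by
  obtain ⟨x, hx, hT, hdi, hnul⟩ := h
  refine ⟨toDual x, hx, by rw [hT]; rfl, (doublyIrrOn_dual hx).mpr hdi, ?_⟩
  rw [hT] at hnul ⊢
  rw [nullity_sub_dual, nullity_sub_dual]; exact hnul

lemma pendantStep_dual [PartialOrder α] {S T : Set α} (h : PendantStep S T) :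
    PendantStep (ofDual ⁻¹' S : Set αᵒᵈ) (ofDual ⁻¹' T) := by
  obtain ⟨x, hx, hT, hcard⟩ := h
  refine ⟨toDual x, hx, by rw [hT]; rfl, ?_⟩
  rw [← hcard, ← Nat.card_coe_set_eq, ← Nat.card_coe_set_eq]
  refine Nat.card_congr (Equiv.subtypeEquiv (dualSubEquiv S) (fun y => ?_))
  exact ⟨fun h => h.elim (fun h => Or.inr ((dualSub_covBy_iff y ⟨toDual x, hx⟩).mp h))
      (fun h => Or.inl ((dualSub_covBy_iff ⟨toDual x, hx⟩ y).mp h)),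
    fun h => h.elim (fun h => Or.inr ((dualSub_covBy_iff ⟨toDual x, hx⟩ y).mpr h))
      (fun h => Or.inl ((dualSub_covBy_iff y ⟨toDual x, hx⟩).mpr h))⟩

lemma basicBlockAssoc_dual [PartialOrder α] {S : Set α} (h : IsBasicBlockAssoc α S) :
    IsBasicBlockAssoc αᵒᵈ (ofDual ⁻¹' S) := by
  obtain ⟨R, ⟨hR1, hR2⟩, hRS, hSmax⟩ := h
  refine ⟨ofDual ⁻¹' R, ⟨?_, ?_⟩, ?_, ?_⟩
  · exact Relation.ReflTransGen.lift (fun U : Set α => (ofDual ⁻¹' U : Set αᵒᵈ))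
      (fun _ _ h => retractStep_dual h : ∀ U V : Set α, RetractStep U V →
        RetractStep (ofDual ⁻¹' U : Set αᵒᵈ) (ofDual ⁻¹' V)) _ _ hR1
  · intro T hT
    exact hR2 (toDual ⁻¹' T) (retractStep_dual (α := αᵒᵈ) hT)
  · exact Relation.ReflTransGen.lift (fun U : Set α => (ofDual ⁻¹' U : Set αᵒᵈ))
      (fun _ _ h => pendantStep_dual h : ∀ U V : Set α, PendantStep U V →
        PendantStep (ofDual ⁻¹' U : Set αᵒᵈ) (ofDual ⁻¹' V)) _ _ hRS
  · intro T hT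
    exact hSmax (toDual ⁻¹' T) (pendantStep_dual (α := αᵒᵈ) hT)

lemma basicBlockAssoc_dual_iff [PartialOrder α] (S : Set α) :
    IsBasicBlockAssoc α S ↔ IsBasicBlockAssoc αᵒᵈ (ofDual ⁻¹' S) :=
  ⟨basicBlockAssoc_dual, fun h => basicBlockAssoc_dual (α := αᵒᵈ) h⟩

end DualTransfer

/-- dualization preserves being an adjunct of chains, the number of elements,
the number of reducible elements, and the nullity; and basic blocks dualize. -/
theorem dual_adjunct_of_chains (α : Type*) [Lattice α] [Fintype α] (k : ℕ)
    (C : Fin (k + 1) → Set α) (a b : Fin (k + 1) → α)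
    (hrep : IsAdjunctRep α k C a b) (hmax : IsMaxChain (· ≤ ·) (C 0)) :
    (∃ k', IsAdjunctOfChains αᵒᵈ k') ∧
    Nat.card αᵒᵈ = Nat.card α ∧
    Nat.card {x : αᵒᵈ // LatReducible x} = Nat.card {x : α // LatReducible x} ∧
    nullity αᵒᵈ = nullity α ∧
    ∀ S : Set α, IsBasicBlockAssoc α S ↔
      IsBasicBlockAssoc αᵒᵈ (OrderDual.ofDual ⁻¹' S) := by
  obtain ⟨hchain, hne, hunion, hdisj, hadj⟩ := hrep
  refine ⟨⟨k, fun i => OrderDual.ofDual ⁻¹' C i, fun i => OrderDual.toDual (b i),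
      fun i => OrderDual.toDual (a i), ?_, ?_, ?_, ?_, ?_⟩,
    Nat.card_congr OrderDual.ofDual,
    Nat.card_congr (Equiv.subtypeEquiv OrderDual.ofDual latReducible_dual'),
    nullity_dual' α, fun S => basicBlockAssoc_dual_iff S⟩
  · intro i x hx y hy hxy
    rcases hchain i hy hx (fun h => hxy (congrArg OrderDual.toDual h).symm) with h | h
    · exact Or.inl h
    · exact Or.inr h
  · intro i
    obtain ⟨w, hw⟩ := hne i
    exact ⟨OrderDual.toDual w, hw⟩
  · rw [← Set.preimage_iUnion, hunion]; rfl
  · exact fun i j hij => (hdisj hij).preimage _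
  · intro i hi
    obtain ⟨hab, hncov, ⟨j1, hj1, ha1⟩, ⟨j2, hj2, hb2⟩, hout⟩ := hadj i hi
    refine ⟨OrderDual.toDual_lt_toDual.mpr hab,
      fun h => hncov (toDual_covBy_toDual_iff.mp h),
      ⟨j2, hj2, hb2⟩, ⟨j1, hj1, ha1⟩, ?_⟩
    intro x hx y hy
    have H := hout (OrderDual.ofDual x) hx (OrderDual.ofDual y) hy
    exact ⟨H.2, H.1⟩
end
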